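/- The set of unit vectors in ℝ³ all of whose coordinates are rational is dense in the unit sphere S² = {x ∈ ℝ³ : ‖x‖ = 1}; that is, for every x ∈ S² and every ε > 0 there exists q ∈ ℝ³ with ‖q‖ = 1, all three coordinates of q rational, and ‖x − q‖ < ε. -/

import Mathlib

open scoped BigOperators

/-- Stereographic parametrization of the unit sphere. -/
noncomputable def sig (u v : ℝ) : EuclideanSpace ℝ (Fin 3) :=
  WithLp.toLp 2 ![2*u/(u^2+v^2+1), 2*v/(u^2+v^2+1), (u^2+v^2-1)/(u^2+v^2+1)]

lemma sig_norm (u v : ℝ) : ‖sig u v‖ = 1 := by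
  have hd : (u^2+v^2+1) ≠ 0 := by positivity
  rw [EuclideanSpace.norm_eq]
  rw [show (1:ℝ) = Real.sqrt 1 by simp]
  congr 1
  simp [sig, Fin.sum_univ_three]
  field_simp
  ring

lemma sig_cont : Continuous (fun p : ℝ × ℝ => sig p.1 p.2) := by
  have hd : ∀ p : ℝ × ℝ, (p.1^2+p.2^2+1) ≠ 0 := fun p => by positivity
  apply Continuous.comp (PiLp.continuous_toLp 2 (fun _ : Fin 3 => ℝ))
  apply continuous_pi
  intro i
  fin_cases i <;> simp [sig] <;>
    exact Continuous.div (by continuity) (by continuity) hd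

lemma sig_surj (x : EuclideanSpace ℝ (Fin 3)) (h : (x 0)^2 + (x 1)^2 + (x 2)^2 = 1)
    (hc : x 2 ≠ 1) : sig (x 0 / (1 - x 2)) (x 1 / (1 - x 2)) = x := by
  have ht : (1 : ℝ) - x 2 ≠ 0 := sub_ne_zero.mpr (Ne.symm hc)
  have hd : (x 0 / (1-x 2))^2 + (x 1 / (1-x 2))^2 + 1 ≠ 0 := by positivity
  ext i
  fin_cases i
  · show 2*(x 0/(1-x 2))/_ = x 0
    field_simp
    linear_combination (-x 0) * h
  · show 2*(x 1/(1-x 2))/_ = x 1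
    field_simp
    linear_combination (-x 1) * h
  · show ((x 0/(1-x 2))^2+(x 1/(1-x 2))^2-1)/_ = x 2
    field_simp
    linear_combination (1 - x 2) * h

lemma sig_rat (u v : ℚ) : ∀ i, ∃ r : ℚ, sig (u : ℝ) (v : ℝ) i = (r : ℝ) := by
  have hd : (u^2+v^2+1 : ℚ) ≠ 0 := by positivity
  intro i
  fin_cases i
  · exact ⟨2*u/(u^2+v^2+1), by simp [sig]⟩
  · exact ⟨2*v/(u^2+v^2+1), by simp [sig]⟩
  · exact ⟨(u^2+v^2-1)/(u^2+v^2+1), by simp [sig]⟩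

/-- The unit vectors of `ℝ³` with all coordinates rational are dense in the unit
sphere `S²` (with the standard Euclidean norm): for every `x` with `‖x‖ = 1` and
every `ε > 0` there is a rational unit vector `q` with `‖x − q‖ < ε`. -/
theorem rational_unit_vectors_dense_in_sphere :
    ∀ x : EuclideanSpace ℝ (Fin 3), ‖x‖ = 1 → ∀ ε : ℝ, 0 < ε →
      ∃ q : EuclideanSpace ℝ (Fin 3), ‖q‖ = 1 ∧ (∀ i, ∃ r : ℚ, q i = (r : ℝ)) ∧
        ‖x - q‖ < ε := by
  intro x hx ε hε
  have hsum : (x 0)^2 + (x 1)^2 + (x 2)^2 = 1 := by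
    rw [EuclideanSpace.norm_eq] at hx
    have := Real.sqrt_eq_one.mp hx
    simpa [Fin.sum_univ_three, Real.norm_eq_abs, sq_abs] using this
  by_cases hc : x 2 = 1
  · have h0 : x 0 = 0 := by nlinarith [sq_nonneg (x 0), sq_nonneg (x 1)]
    have h1 : x 1 = 0 := by nlinarith [sq_nonneg (x 0), sq_nonneg (x 1)]
    refine ⟨x, hx, ?_, by simpa using hε⟩
    intro i
    fin_cases i
    · exact ⟨0, by simpa using h0⟩
    · exact ⟨0, by simpa using h1⟩
    · exact ⟨1, by simpa using hc⟩
  · set p0 : ℝ × ℝ := (x 0 / (1 - x 2), x 1 / (1 - x 2)) with hp0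
    obtain ⟨δ, hδ, H⟩ := Metric.continuous_iff.mp sig_cont p0 ε hε
    obtain ⟨u, hu⟩ := exists_rat_near (x 0 / (1 - x 2)) (half_pos hδ)
    obtain ⟨v, hv⟩ := exists_rat_near (x 1 / (1 - x 2)) (half_pos hδ)
    have hdist : dist ((u : ℝ), (v : ℝ)) p0 < δ := by
      rw [Prod.dist_eq]
      rw [hp0]
      simp only [Real.dist_eq]
      rw [abs_sub_comm (u:ℝ), abs_sub_comm (v:ℝ)]
      exact max_lt (by linarith) (by linarith)
    have hq := H ((u : ℝ), (v : ℝ)) hdist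
    have hfp0 : sig p0.1 p0.2 = x := sig_surj x hsum hc
    refine ⟨sig u v, sig_norm u v, sig_rat u v, ?_⟩
    have heq : ‖x - sig (u:ℝ) (v:ℝ)‖ = dist (sig (u:ℝ) (v:ℝ)) (sig p0.1 p0.2) := by
      rw [hfp0, dist_eq_norm, norm_sub_rev]
    rw [heq]
    exact hq
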